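/- Let G be a group with subgroups N, H and F such that N is normal in G, N ∩ H = {1}, NH = G, and F = (N ∩ F)(H ∩ F). Then for all n, n′ ∈ N and h, h′ ∈ H: n h F = n′ h′ F if and only if h(H ∩ F) = h′(H ∩ F) and n(N ∩ hFh⁻¹) = n′(N ∩ h′F h′⁻¹). -/

import Mathlib

open Pointwise

/-- coset criterion from the proof of Lemma 11.4 of
Haskell–Hrushovski–Macpherson.  `G` is a group with subgroups `N, H, F`, `N` normal,
`N ∩ H = 1`, `N H = G`, and `F = (N ∩ F)(H ∩ F)`.  Then for `n, n' ∈ N` and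
`h, h' ∈ H`: `n h F = n' h' F` iff `h (H ∩ F) = h' (H ∩ F)` and
`n (N ∩ h F h⁻¹) = n' (N ∩ h' F h'⁻¹)`.  Cosets are written as translates of the
underlying sets, and `h F h⁻¹` as the image of `F` under conjugation by `h`. -/
theorem coset_criterion {G : Type*} [Group G] (N H F : Subgroup G)
    (hNnormal : N.Normal)
    (hNH : N ⊓ H = ⊥)
    (hprod : (N : Set G) * (H : Set G) = Set.univ)
    (hF : (F : Set G) = ((N ⊓ F : Subgroup G) : Set G) * ((H ⊓ F : Subgroup G) : Set G))
    {n n' h h' : G} (hn : n ∈ N) (hn' : n' ∈ N) (hh : h ∈ H) (hh' : h' ∈ H) :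
    (n * h) • (F : Set G) = (n' * h') • (F : Set G) ↔
      (h • ((H ⊓ F : Subgroup G) : Set G) = h' • ((H ⊓ F : Subgroup G) : Set G) ∧
        n • ((N : Set G) ∩ ((fun x => h * x * h⁻¹) '' (F : Set G))) =
          n' • ((N : Set G) ∩ ((fun x => h' * x * h'⁻¹) '' (F : Set G)))) := by
  -- abbreviations
  have htriv : ∀ x : G, x ∈ N → x ∈ H → x = 1 := by
    intro x h1 h2
    have : x ∈ N ⊓ H := ⟨h1, h2⟩
    rw [hNH] at this
    exact Subgroup.mem_bot.mp this
  have hdecomp : ∀ f ∈ F, ∃ a ∈ (N ⊓ F : Subgroup G), ∃ b ∈ (H ⊓ F : Subgroup G),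
      a * b = f := by
    intro f hf
    have : f ∈ ((N ⊓ F : Subgroup G) : Set G) * ((H ⊓ F : Subgroup G) : Set G) := hF ▸ hf
    obtain ⟨a, ha, b, hb, hab⟩ := this
    exact ⟨a, ha, b, hb, hab⟩
  -- the conjugated subgroup
  set K : G → Subgroup G := fun g => (N ⊓ F).map (MulAut.conj g).toMonoidHom with hK
  have hKmem : ∀ g x : G, x ∈ K g ↔ ∃ a ∈ (N ⊓ F : Subgroup G), g * a * g⁻¹ = x := by
    intro g x
    simp [hK, Subgroup.mem_map, MulAut.conj_apply]
  -- Lemma A : the set in the statement is the coset space of `K g`, for `g ∈ H`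
  have hA : ∀ g ∈ H, (N : Set G) ∩ ((fun x => g * x * g⁻¹) '' (F : Set G))
      = ((K g : Subgroup G) : Set G) := by
    intro g hg
    ext x
    simp only [Set.mem_inter_iff, Set.mem_image, SetLike.mem_coe, hKmem]
    constructor
    · rintro ⟨hxN, f, hfF, rfl⟩
      obtain ⟨a, ha, b, hb, rfl⟩ := hdecomp f hfF
      have haN : g * a * g⁻¹ ∈ N := hNnormal.conj_mem a ha.1 g
      have hbN : g * b * g⁻¹ ∈ N := by
        have h2 : (g * a * g⁻¹)⁻¹ * (g * (a * b) * g⁻¹) ∈ N :=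
          N.mul_mem (N.inv_mem haN) hxN
        have h3 : (g * a * g⁻¹)⁻¹ * (g * (a * b) * g⁻¹) = g * b * g⁻¹ := by group
        rwa [h3] at h2
      have hbH : g * b * g⁻¹ ∈ H := H.mul_mem (H.mul_mem hg hb.1) (H.inv_mem hg)
      have hb1 : b = 1 := by
        have := htriv _ hbN hbH
        have : b = g⁻¹ * (g * b * g⁻¹) * g := by group
        rw [htriv _ hbN hbH] at this
        simpa using this
      refine ⟨a, ha, ?_⟩
      rw [hb1, mul_one]
    · rintro ⟨a, ha, rfl⟩
      exact ⟨hNnormal.conj_mem a ha.1 g, a, ha.2, rfl⟩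
  -- conjugation by elements of H ⊓ F preserves N ⊓ F
  have hconjFN : ∀ b ∈ (H ⊓ F : Subgroup G), ∀ a ∈ (N ⊓ F : Subgroup G),
      b * a * b⁻¹ ∈ (N ⊓ F : Subgroup G) := by
    intro b hb a ha
    exact ⟨hNnormal.conj_mem a ha.1 b, F.mul_mem (F.mul_mem hb.2 ha.2) (F.inv_mem hb.2)⟩
  -- K h = K h' when h⁻¹ * h' ∈ H ⊓ F
  have hKeq : ∀ g g' : G, g⁻¹ * g' ∈ (H ⊓ F : Subgroup G) → K g = K g' := by
    intro g g' hb
    set b := g⁻¹ * g' with hbdef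
    have hg' : g' = g * b := by rw [hbdef]; group
    ext x
    rw [hKmem, hKmem]
    constructor
    · rintro ⟨a, ha, rfl⟩
      refine ⟨b⁻¹ * a * b, ?_, ?_⟩
      · have := hconjFN b⁻¹ ((H ⊓ F).inv_mem hb) a ha
        simpa using this
      · rw [hg']; group
    · rintro ⟨a, ha, rfl⟩
      refine ⟨b * a * b⁻¹, hconjFN b hb a ha, ?_⟩
      rw [hg']; group
  rw [hA h hh, hA h' hh', leftCoset_eq_iff, leftCoset_eq_iff]
  constructor
  · intro hmain
    obtain ⟨a, ha, b, hb, hab⟩ := hdecomp _ hmain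
    have hn'eq : n' = n * h * (a * b) * h'⁻¹ := by
      have h0 : (n * h) * ((n * h)⁻¹ * (n' * h')) * h'⁻¹ = n' := by group
      rw [← hab] at h0
      rw [← h0]
    have key : n⁻¹ * n' * (h * b * h'⁻¹)⁻¹ = h * a * h⁻¹ := by
      rw [hn'eq]; group
    have hcN : h * b * h'⁻¹ ∈ N := by
      have h1 : h * a * h⁻¹ ∈ N := hNnormal.conj_mem a ha.1 h
      have h2 : n⁻¹ * n' ∈ N := N.mul_mem (N.inv_mem hn) hn'
      have : (h * a * h⁻¹)⁻¹ * (n⁻¹ * n') ∈ N := N.mul_mem (N.inv_mem h1) h2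
      have heq : (h * a * h⁻¹)⁻¹ * (n⁻¹ * n') = h * b * h'⁻¹ := by
        rw [← key]; group
      rwa [heq] at this
    have hcH : h * b * h'⁻¹ ∈ H := H.mul_mem (H.mul_mem hh hb.1) (H.inv_mem hh')
    have hc1 : h * b * h'⁻¹ = 1 := htriv _ hcN hcH
    have hbeq : h⁻¹ * h' = b := by
      have : h' = h * b := by
        have : h * b * h'⁻¹ * h' = h' := by rw [hc1]; simp
        rw [← this]; group
      rw [this]; group
    constructor
    · rw [hbeq]; exact hb
    · have hKe : K h = K h' := hKeq h h' (hbeq ▸ hb)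
      rw [← hKe, leftCoset_eq_iff, hKmem]
      refine ⟨a, ha, ?_⟩
      rw [← key, hc1]; group
  · rintro ⟨h1, h2⟩
    have hKe : K h = K h' := hKeq h h' h1
    rw [← hKe, leftCoset_eq_iff, hKmem] at h2
    obtain ⟨a, ha, hae⟩ := h2
    have hn'2 : n' = n * (h * a * h⁻¹) := by rw [hae]; group
    have : (n * h)⁻¹ * (n' * h') = a * (h⁻¹ * h') := by
      rw [hn'2]; group
    rw [this]
    exact F.mul_mem ha.2 h1.2
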